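/- Let F = {f_i} be a J-frame for a Krein space H. Then F is a tight J-frame (i.e. its J-frame operator equals αI for some α > 0) if and only if: M₋ = M₊^{[⊥]}, F₊ = {f_i}_{i∈I₊} is a tight frame for the Hilbert space (M₊, [·,·]), F₋ = {f_i}_{i∈I₋} is a tight frame for the Hilbert space (M₋, −[·,·]), and the two tight-frame bounds coincide. -/

import Mathlib

noncomputable section

open scoped Classical

open Function

/-- The indefinite inner product `[x,y] = ⟨Jx, y⟩` induced by an operator `J`. -/
def kre {E : Type*} [NormedAddCommGroup E] [InnerProductSpace ℂ E]
    (J : E →L[ℂ] E) (x y : E) : ℂ := @inner ℂ _ _ (J x) y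

/-- `J` is a fundamental symmetry: a selfadjoint unitary (involutive) operator. -/
def IsFundSym {E : Type*} [NormedAddCommGroup E] [InnerProductSpace ℂ E] [CompleteSpace E]
    (J : E →L[ℂ] E) : Prop :=
  IsSelfAdjoint J ∧ J.comp J = ContinuousLinearMap.id ℂ E

/-- The J-orthogonal companion of a subspace. -/
def JorthCompanion {E : Type*} [NormedAddCommGroup E] [InnerProductSpace ℂ E]
    (J : E →L[ℂ] E) (S : Submodule ℂ E) : Submodule ℂ E where
  carrier := {x | ∀ s ∈ S, kre J x s = 0}
  zero_mem' := by intro s hs; simp [kre]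
  add_mem' := by
    intro a b ha hb s hs
    have h1 := ha s hs
    have h2 := hb s hs
    simp only [kre, map_add, inner_add_left] at h1 h2 ⊢
    rw [h1, h2, add_zero]
  smul_mem' := by
    intro c x hx s hs
    have h1 := hx s hs
    simp only [kre, map_smul, inner_smul_left] at h1 ⊢
    rw [h1, mul_zero]

/-- Uniformly J-positive subspace. -/
def UnifJPos {E : Type*} [NormedAddCommGroup E] [InnerProductSpace ℂ E]
    (J : E →L[ℂ] E) (S : Submodule ℂ E) : Prop :=
  ∃ α : ℝ, 0 < α ∧ ∀ x ∈ S, α * ‖x‖ ^ 2 ≤ (kre J x x).re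

/-- Uniformly J-negative subspace. -/
def UnifJNeg {E : Type*} [NormedAddCommGroup E] [InnerProductSpace ℂ E]
    (J : E →L[ℂ] E) (S : Submodule ℂ E) : Prop :=
  ∃ α : ℝ, 0 < α ∧ ∀ x ∈ S, (kre J x x).re ≤ -(α * ‖x‖ ^ 2)

/-- Maximal uniformly J-positive subspace. -/
def MaxUnifJPos {E : Type*} [NormedAddCommGroup E] [InnerProductSpace ℂ E]
    (J : E →L[ℂ] E) (S : Submodule ℂ E) : Prop :=
  UnifJPos J S ∧ ∀ S' : Submodule ℂ E, UnifJPos J S' → S ≤ S' → S' = S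

/-- Maximal uniformly J-negative subspace. -/
def MaxUnifJNeg {E : Type*} [NormedAddCommGroup E] [InnerProductSpace ℂ E]
    (J : E →L[ℂ] E) (S : Submodule ℂ E) : Prop :=
  UnifJNeg J S ∧ ∀ S' : Submodule ℂ E, UnifJNeg J S' → S ≤ S' → S' = S

/-- J-selfadjoint operator (with respect to the indefinite inner product of `J`). -/
def IsJSelfAdj {E : Type*} [NormedAddCommGroup E] [InnerProductSpace ℂ E]
    (J : E →L[ℂ] E) (A : E →L[ℂ] E) : Prop :=
  ∀ x y : E, kre J (A x) y = kre J x (A y)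

/-- The J-order: `A ≤_J B` iff `B - A` is J-positive. -/
def JLe {E : Type*} [NormedAddCommGroup E] [InnerProductSpace ℂ E]
    (J : E →L[ℂ] E) (A B : E →L[ℂ] E) : Prop :=
  ∀ x : E, 0 ≤ (kre J (B x - A x) x).re ∧ (kre J (B x - A x) x).im = 0

/-- The subspace of `ℓ²(I)` supported on a subset (given by a predicate) of `I`. -/
def suppSub {I : Type*} (A : I → Prop) : Submodule ℂ (lp (fun _ : I => ℂ) 2) where
  carrier := {x | ∀ i, ¬ A i → x i = 0}
  zero_mem' := by intro i _; rfl
  add_mem' := by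
    intro a b ha hb i hi
    have : (↑(a + b) : ∀ i, ℂ) i = a i + b i := by
      rw [lp.coeFn_add]; rfl
    simp [this, ha i hi, hb i hi]
  smul_mem' := by
    intro c x hx i hi
    have : (↑(c • x) : ∀ i, ℂ) i = c • x i := by
      rw [lp.coeFn_smul]; rfl
    simp [this, hx i hi]

variable {H : Type*} [NormedAddCommGroup H] [InnerProductSpace ℂ H] [CompleteSpace H]
variable {I : Type*} [DecidableEq I]

/-- `i` is a "positive index" for the family `f` w.r.t. `J`: `[f i, f i] ≥ 0`. -/
def posIdx {H : Type*} [NormedAddCommGroup H] [InnerProductSpace ℂ H]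
    (J : H →L[ℂ] H) (f : I → H) (i : I) : Prop := 0 ≤ (kre J (f i) (f i)).re

/-- The sign `σ_i = sgn [f i, f i]` (as a complex scalar, `+1` on `I₊` and `-1` on `I₋`). -/
def sgnv {H : Type*} [NormedAddCommGroup H] [InnerProductSpace ℂ H]
    (J : H →L[ℂ] H) (f : I → H) (i : I) : ℂ := if posIdx J f i then 1 else -1

/-- Closure of the span of the vectors of the family `h` with positive indices (signs taken
from the family `f`). -/
def posSpan {H : Type*} [NormedAddCommGroup H] [InnerProductSpace ℂ H]
    (J : H →L[ℂ] H) (f h : I → H) : Submodule ℂ H :=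
  (Submodule.span ℂ {x | ∃ i, posIdx J f i ∧ h i = x}).topologicalClosure

/-- Closure of the span of the vectors of the family `h` with negative indices. -/
def negSpan {H : Type*} [NormedAddCommGroup H] [InnerProductSpace ℂ H]
    (J : H →L[ℂ] H) (f h : I → H) : Submodule ℂ H :=
  (Submodule.span ℂ {x | ∃ i, ¬ posIdx J f i ∧ h i = x}).topologicalClosure

/-- A Bessel family in a Hilbert space. -/
def IsBessel {H : Type*} [NormedAddCommGroup H] [InnerProductSpace ℂ H]
    (g : I → H) : Prop :=
  ∃ β : ℝ, ∀ (x : H) (s : Finset I),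
    ∑ i ∈ s, ‖@inner ℂ _ _ (g i) x‖ ^ 2 ≤ β * ‖x‖ ^ 2

/-- `g` is a dual family for `f`: the signs coincide and the two indefinite
reconstruction formulas hold. -/
def IsDualFamily {H : Type*} [NormedAddCommGroup H] [InnerProductSpace ℂ H]
    (J : H →L[ℂ] H) (f g : I → H) : Prop :=
  (∀ i, Real.sign ((kre J (g i) (g i)).re) = Real.sign ((kre J (f i) (f i)).re)) ∧
  (∀ x : H, HasSum (fun i => (sgnv J f i * kre J x (f i)) • g i) x) ∧
  (∀ x : H, HasSum (fun i => (sgnv J f i * kre J x (g i)) • f i) x)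



/-- Polarization: a sesquilinear form vanishing on the diagonal of a subspace
vanishes on the whole subspace. -/
lemma sesq_polar {E : Type*} [AddCommGroup E] [Module ℂ E] (W : Submodule ℂ E)
    (D : E → E → ℂ)
    (h1 : ∀ x y z, D (x + y) z = D x z + D y z)
    (h2 : ∀ x y z, D x (y + z) = D x y + D x z)
    (h3 : ∀ (c : ℂ) (x y : E), D (c • x) y = (starRingEnd ℂ) c * D x y)
    (h4 : ∀ (c : ℂ) (x y : E), D x (c • y) = c * D x y)
    (hdiag : ∀ x ∈ W, D x x = 0) :
    ∀ x ∈ W, ∀ y ∈ W, D x y = 0 := by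
  intro x hx y hy
  have e1 : D x y + D y x = 0 := by
    have h := hdiag (x + y) (W.add_mem hx hy)
    rw [h1, h2, h2, hdiag x hx, hdiag y hy] at h
    linear_combination h
  have e2 : Complex.I * D x y - Complex.I * D y x = 0 := by
    have h := hdiag (x + Complex.I • y) (W.add_mem hx (W.smul_mem _ hy))
    simp only [h1, h2, h3, h4] at h
    rw [hdiag x hx, hdiag y hy, Complex.conj_I] at h
    linear_combination h
  have e3 : Complex.I * (2 * D x y) = 0 := by linear_combination e2 + Complex.I * e1
  rcases mul_eq_zero.mp e3 with h | h
  · exact absurd h Complex.I_ne_zero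
  · rcases mul_eq_zero.mp h with h' | h'
    · exact absurd h' two_ne_zero
    · exact h'

set_option maxHeartbeats 2000000 in
/-- `F` is a tight J-frame (`S = αI`, `α > 0`) iff `M₋ = M₊^[⊥]` and
`F₊`, `F₋` are tight frames for `(M₊, [·,·])`, `(M₋, -[·,·])` with the same bound. -/
theorem tight_jframe_iff
    (J : H →L[ℂ] H) (hJ : IsFundSym J) (f : I → H)
    (T : lp (fun _ : I => ℂ) 2 →L[ℂ] H)
    (hT : ∀ i, T (lp.single 2 i (1:ℂ)) = f i)
    (hTsurj : Function.Surjective T)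
    (Pp Pm : lp (fun _ : I => ℂ) 2 →L[ℂ] lp (fun _ : I => ℂ) 2)
    (hPp : ∀ (x : lp (fun _ : I => ℂ) 2) (i : I), Pp x i = if posIdx J f i then x i else 0)
    (hPm : ∀ (x : lp (fun _ : I => ℂ) 2) (i : I), Pm x i = if posIdx J f i then 0 else x i)
    (hJF : MaxUnifJPos J (LinearMap.range (T.comp Pp : lp (fun _ : I => ℂ) 2 →ₗ[ℂ] H)) ∧
      MaxUnifJNeg J (LinearMap.range (T.comp Pm : lp (fun _ : I => ℂ) 2 →ₗ[ℂ] H)))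
    (Tp : H →L[ℂ] lp (fun _ : I => ℂ) 2)
    (hTp : ∀ (x : lp (fun _ : I => ℂ) 2) (y : H), kre J (T x) y = kre (Pp - Pm) x (Tp y)) :
    (∃ α : ℝ, 0 < α ∧ T.comp Tp = (α : ℂ) • ContinuousLinearMap.id ℂ H) ↔
      (LinearMap.range (T.comp Pm : lp (fun _ : I => ℂ) 2 →ₗ[ℂ] H) = JorthCompanion J (LinearMap.range (T.comp Pp : lp (fun _ : I => ℂ) 2 →ₗ[ℂ] H)) ∧
        ∃ α : ℝ, 0 < α ∧
          (∀ x ∈ LinearMap.range (T.comp Pp : lp (fun _ : I => ℂ) 2 →ₗ[ℂ] H),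
            HasSum (fun i : {i // posIdx J f i} => ‖kre J x (f i.1)‖ ^ 2)
              (α * (kre J x x).re)) ∧
          (∀ x ∈ LinearMap.range (T.comp Pm : lp (fun _ : I => ℂ) 2 →ₗ[ℂ] H),
            HasSum (fun i : {i // ¬ posIdx J f i} => ‖kre J x (f i.1)‖ ^ 2)
              (α * (-(kre J x x).re)))) := by
  obtain ⟨hJsa, hJ2⟩ := hJ
  have hJJ : ∀ x : H, J (J x) = x := by
    intro x
    have := ContinuousLinearMap.ext_iff.1 hJ2 x
    simpa using this
  have hJsym : ∀ x y : H, (inner ℂ (J x) y : ℂ) = inner ℂ x (J y) := by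
    intro x y
    conv_lhs => rw [← hJsa.adjoint_eq]
    exact ContinuousLinearMap.adjoint_inner_left J y x
  have hconj : ∀ x y : H, kre J x y = (starRingEnd ℂ) (kre J y x) := by
    intro x y
    simp only [kre]
    rw [← inner_conj_symm, ← hJsym y x]
  have hreal : ∀ x : H, (kre J x x).im = 0 := by
    intro x
    have h := congrArg Complex.im (hconj x x)
    simp only [Complex.conj_im] at h
    linarith
  -- coordinatewise basics for the projections
  have hPpPm : ∀ u : lp (fun _ : I => ℂ) 2, Pp u + Pm u = u := by
    intro u
    apply lp.ext
    funext i
    have hadd : (↑(Pp u + Pm u) : ∀ _ : I, ℂ) i = Pp u i + Pm u i := by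
      rw [lp.coeFn_add]; rfl
    rw [hadd, hPp, hPm]
    split_ifs <;> simp
  have hPpPp : ∀ u, Pp (Pp u) = Pp u := by
    intro u; apply lp.ext; funext i
    rw [hPp, hPp]; split_ifs <;> simp
  have hPmPm : ∀ u, Pm (Pm u) = Pm u := by
    intro u; apply lp.ext; funext i
    rw [hPm, hPm]; split_ifs <;> simp
  have hPpPm0 : ∀ u, Pp (Pm u) = 0 := by
    intro u; apply lp.ext; funext i
    rw [lp.coeFn_zero, hPp, hPm]
    split_ifs <;> simp
  have hPmPp0 : ∀ u, Pm (Pp u) = 0 := by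
    intro u; apply lp.ext; funext i
    rw [lp.coeFn_zero, hPm, hPp]
    split_ifs <;> simp
  -- inner-product identities for the projections
  have hinPp : ∀ u v : lp (fun _ : I => ℂ) 2, (inner ℂ (Pp u) v : ℂ) = inner ℂ (Pp u) (Pp v) := by
    intro u v
    rw [lp.inner_eq_tsum, lp.inner_eq_tsum]
    apply tsum_congr
    intro i
    rw [hPp u i, hPp v i]
    split_ifs <;> simp
  have hinPm : ∀ u v : lp (fun _ : I => ℂ) 2, (inner ℂ (Pm u) v : ℂ) = inner ℂ (Pm u) (Pm v) := by
    intro u v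
    rw [lp.inner_eq_tsum, lp.inner_eq_tsum]
    apply tsum_congr
    intro i
    rw [hPm u i, hPm v i]
    split_ifs <;> simp
  have hadjp : ∀ u v : lp (fun _ : I => ℂ) 2, (inner ℂ (Pp u) v : ℂ) = inner ℂ u (Pp v) := by
    intro u v
    rw [lp.inner_eq_tsum, lp.inner_eq_tsum]
    apply tsum_congr
    intro i
    rw [hPp u i, hPp v i]
    split_ifs <;> simp
  have hadjm : ∀ u v : lp (fun _ : I => ℂ) 2, (inner ℂ (Pm u) v : ℂ) = inner ℂ u (Pm v) := by
    intro u v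
    rw [lp.inner_eq_tsum, lp.inner_eq_tsum]
    apply tsum_congr
    intro i
    rw [hPm u i, hPm v i]
    split_ifs <;> simp
  -- the key identity for the indefinite inner ℂ product
  have hkey : ∀ (u : lp (fun _ : I => ℂ) 2) (y : H),
      kre J (T u) y = inner ℂ (Pp u) (Pp (Tp y)) - inner ℂ (Pm u) (Pm (Tp y)) := by
    intro u y
    rw [hTp u y]
    show (inner ℂ ((Pp - Pm) u) (Tp y) : ℂ) = _
    rw [ContinuousLinearMap.sub_apply, inner_sub_left, hinPp, hinPm]
  -- coordinates of the analysis operator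
  have htpc : ∀ (y : H) (i : I),
      kre J (f i) y = (if posIdx J f i then (Tp y : ∀ _ : I, ℂ) i else -(Tp y : ∀ _ : I, ℂ) i) := by
    intro y i
    rw [← hT i, hkey]
    rw [hadjp, hadjm, hPpPp, hPmPm]
    rw [lp.inner_single_left, lp.inner_single_left]
    rw [hPp (Tp y) i, hPm (Tp y) i]
    split_ifs <;> simp
  -- the HasSum identities
  have hsump : ∀ y : H, HasSum (fun i : {i // posIdx J f i} => ‖kre J y (f i.1)‖ ^ 2)
      (‖Pp (Tp y)‖ ^ 2) := by
    intro y
    have h0 := lp.hasSum_norm (p := 2) (by norm_num) (Pp (Tp y))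
    have h0' : HasSum (fun i : I => ‖(Pp (Tp y) : ∀ _ : I, ℂ) i‖ ^ 2) (‖Pp (Tp y)‖ ^ 2) := by
      convert h0 using 2 with i
      · rw [← Real.rpow_natCast]; norm_num
      · rw [← Real.rpow_natCast]; norm_num
    have hsupp : Function.support (fun i : I => ‖(Pp (Tp y) : ∀ _ : I, ℂ) i‖ ^ 2)
        ⊆ {i : I | posIdx J f i} := by
      intro i hi
      by_contra h
      apply hi
      simp only [Set.mem_setOf_eq] at h
      simp only [Function.mem_support] at *
      rw [hPp (Tp y) i, if_neg h]
      simp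
    have hfun : (fun i : {i // posIdx J f i} => ‖kre J y (f i.1)‖ ^ 2)
        = fun i : {i // posIdx J f i} => ‖(Pp (Tp y) : ∀ _ : I, ℂ) i.1‖ ^ 2 := by
      funext i
      rw [hPp (Tp y) i.1, if_pos i.2, hconj y (f i.1), htpc y i.1, if_pos i.2]
      simp
    rw [hfun]
    exact (hasSum_subtype_iff_of_support_subset hsupp).2 h0'
  have hsumm : ∀ y : H, HasSum (fun i : {i // ¬ posIdx J f i} => ‖kre J y (f i.1)‖ ^ 2)
      (‖Pm (Tp y)‖ ^ 2) := by
    intro y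
    have h0 := lp.hasSum_norm (p := 2) (by norm_num) (Pm (Tp y))
    have h0' : HasSum (fun i : I => ‖(Pm (Tp y) : ∀ _ : I, ℂ) i‖ ^ 2) (‖Pm (Tp y)‖ ^ 2) := by
      convert h0 using 2 with i
      · rw [← Real.rpow_natCast]; norm_num
      · rw [← Real.rpow_natCast]; norm_num
    have hsupp : Function.support (fun i : I => ‖(Pm (Tp y) : ∀ _ : I, ℂ) i‖ ^ 2)
        ⊆ {i : I | ¬ posIdx J f i} := by
      intro i hi
      by_contra h
      apply hi
      simp only [Set.mem_setOf_eq, not_not] at h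
      simp only [Function.mem_support] at *
      rw [hPm (Tp y) i, if_pos h]
      simp
    have hfun : (fun i : {i // ¬ posIdx J f i} => ‖kre J y (f i.1)‖ ^ 2)
        = fun i : {i // ¬ posIdx J f i} => ‖(Pm (Tp y) : ∀ _ : I, ℂ) i.1‖ ^ 2 := by
      funext i
      rw [hPm (Tp y) i.1, if_neg i.2, hconj y (f i.1), htpc y i.1, if_neg i.2]
      simp
    rw [hfun]
    exact (hasSum_subtype_iff_of_support_subset hsupp).2 h0'
  -- the ranges intersect trivially
  have hM0 : ∀ x : H, x ∈ LinearMap.range (T.comp Pp : lp (fun _ : I => ℂ) 2 →ₗ[ℂ] H) → x ∈ LinearMap.range (T.comp Pm : lp (fun _ : I => ℂ) 2 →ₗ[ℂ] H) →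
      x = 0 := by
    obtain ⟨⟨⟨a, ha, hba⟩, -⟩, ⟨⟨b, hb, hbb⟩, -⟩⟩ := hJF
    intro x h1 h2
    have e1 := hba x h1
    have e2 := hbb x h2
    have hn : ‖x‖ ^ 2 = 0 := by nlinarith [sq_nonneg ‖x‖]
    have : ‖x‖ = 0 := by nlinarith [norm_nonneg x]
    exact norm_eq_zero.mp this
  constructor
  · -- forward direction
    rintro ⟨α, hα, hS⟩
    have hSapp : ∀ x : H, T (Tp x) = (α : ℂ) • x := by
      intro x
      have := ContinuousLinearMap.ext_iff.1 hS x
      simpa using this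
    -- mixed terms vanish
    have hmixp : ∀ x, x ∈ LinearMap.range (T.comp Pp : lp (fun _ : I => ℂ) 2 →ₗ[ℂ] H) → Pm (Tp x) = 0 := by
      intro x hx
      have hw1 : T (Pm (Tp x)) ∈ LinearMap.range (T.comp Pm : lp (fun _ : I => ℂ) 2 →ₗ[ℂ] H) := ⟨Tp x, rfl⟩
      have hsplit : T (Pp (Tp x)) + T (Pm (Tp x)) = (α : ℂ) • x := by
        rw [← map_add, hPpPm, hSapp]
      have hw2 : T (Pm (Tp x)) ∈ LinearMap.range (T.comp Pp : lp (fun _ : I => ℂ) 2 →ₗ[ℂ] H) := by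
        have : T (Pm (Tp x)) = (α : ℂ) • x - T (Pp (Tp x)) := by
          rw [← hsplit]; abel
        rw [this]
        exact Submodule.sub_mem _ (Submodule.smul_mem _ _ hx) ⟨Tp x, rfl⟩
      have hw0 : T (Pm (Tp x)) = 0 := hM0 _ hw2 hw1
      have h := hkey (Pm (Tp x)) x
      rw [hw0, hPpPm0, hPmPm] at h
      simp only [kre, map_zero, inner_zero_left, zero_sub, inner_zero_left] at h
      have : (inner ℂ (Pm (Tp x)) (Pm (Tp x)) : ℂ) = 0 := by linear_combination h
      exact inner_self_eq_zero.mp this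
    have hmixm : ∀ x, x ∈ LinearMap.range (T.comp Pm : lp (fun _ : I => ℂ) 2 →ₗ[ℂ] H) → Pp (Tp x) = 0 := by
      intro x hx
      have hw1 : T (Pp (Tp x)) ∈ LinearMap.range (T.comp Pp : lp (fun _ : I => ℂ) 2 →ₗ[ℂ] H) := ⟨Tp x, rfl⟩
      have hsplit : T (Pp (Tp x)) + T (Pm (Tp x)) = (α : ℂ) • x := by
        rw [← map_add, hPpPm, hSapp]
      have hw2 : T (Pp (Tp x)) ∈ LinearMap.range (T.comp Pm : lp (fun _ : I => ℂ) 2 →ₗ[ℂ] H) := by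
        have : T (Pp (Tp x)) = (α : ℂ) • x - T (Pm (Tp x)) := by
          rw [← hsplit]; abel
        rw [this]
        exact Submodule.sub_mem _ (Submodule.smul_mem _ _ hx) ⟨Tp x, rfl⟩
      have hw0 : T (Pp (Tp x)) = 0 := hM0 _ hw1 hw2
      have h := hkey (Pp (Tp x)) x
      rw [hw0, hPmPp0, hPpPp] at h
      simp only [kre, map_zero, inner_zero_left, sub_zero] at h
      exact inner_self_eq_zero.mp h.symm
    -- diagonal identities
    have hdiagp : ∀ x, x ∈ LinearMap.range (T.comp Pp : lp (fun _ : I => ℂ) 2 →ₗ[ℂ] H) →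
        ‖Pp (Tp x)‖ ^ 2 = α * (kre J x x).re := by
      intro x hx
      have h := hkey (Tp x) x
      rw [hSapp x, hmixp x hx] at h
      simp only [kre, map_smul, inner_smul_left, Complex.conj_ofReal, map_zero,
        inner_zero_left, sub_zero, inner_self_eq_norm_sq_to_K] at h
      have him : (inner ℂ (J x) x : ℂ).im = 0 := by
        have := hreal x; simpa [kre] using this
      have hxr : (inner ℂ (J x) x : ℂ) = (((inner ℂ (J x) x : ℂ)).re : ℂ) := by
        apply Complex.ext <;> simp [him]
      rw [hxr] at h
      simp only [kre]
      norm_cast at h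
      have hr : α * (inner ℂ (J x) x : ℂ).re = ‖Pp (Tp x)‖ ^ 2 - ‖(0 : lp (fun _ : I => ℂ) 2)‖ ^ 2 :=
        RCLike.ofReal_inj.mp h
      simp only [norm_zero] at hr
      norm_num at hr
      linarith
    have hdiagm : ∀ x, x ∈ LinearMap.range (T.comp Pm : lp (fun _ : I => ℂ) 2 →ₗ[ℂ] H) →
        ‖Pm (Tp x)‖ ^ 2 = α * (-(kre J x x).re) := by
      intro x hx
      have h := hkey (Tp x) x
      rw [hSapp x, hmixm x hx] at h
      simp only [kre, map_smul, inner_smul_left, Complex.conj_ofReal, map_zero,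
        inner_zero_left, norm_zero, inner_self_eq_norm_sq_to_K] at h
      have him : (inner ℂ (J x) x : ℂ).im = 0 := by
        have := hreal x; simpa [kre] using this
      have hxr : (inner ℂ (J x) x : ℂ) = (((inner ℂ (J x) x : ℂ)).re : ℂ) := by
        apply Complex.ext <;> simp [him]
      rw [hxr] at h
      simp only [kre]
      norm_cast at h
      have h' : ((α * (inner ℂ (J x) x : ℂ).re : ℝ) : ℂ)
          = ((-(‖Pm (Tp x)‖ ^ 2) : ℝ) : ℂ) := by
        rw [h]; push_cast; norm_num
      have hr : α * (inner ℂ (J x) x : ℂ).re = -(‖Pm (Tp x)‖ ^ 2) := RCLike.ofReal_inj.mp h'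
      linarith [hr]
    refine ⟨?_, ⟨α, hα, ?_, ?_⟩⟩
    · -- M₋ = companion of M₊
      apply le_antisymm
      · rintro x ⟨u, rfl⟩
        rintro s ⟨v, rfl⟩
        show kre J (T (Pm u)) (T (Pp v)) = 0
        rw [hkey, hPpPm0, hPmPm, hmixp (T (Pp v)) ⟨v, rfl⟩]
        simp
      · intro x hx
        have hx' : ∀ s ∈ LinearMap.range (T.comp Pp : lp (fun _ : I => ℂ) 2 →ₗ[ℂ] H), kre J x s = 0 := hx
        have hPp0 : Pp (Tp x) = 0 := by
          have h1 : kre J (T (Pp (Tp x))) x = 0 := by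
            have hs : T (Pp (Tp x)) ∈ LinearMap.range (T.comp Pp : lp (fun _ : I => ℂ) 2 →ₗ[ℂ] H) := ⟨Tp x, rfl⟩
            rw [hconj, hx' (T (Pp (Tp x))) hs]
            simp
          rw [hkey, hPpPp, hPmPp0] at h1
          simp only [map_zero, inner_zero_left, sub_zero] at h1
          exact inner_self_eq_zero.mp h1
        refine ⟨(α : ℂ)⁻¹ • Tp x, ?_⟩
        have hαne : (α : ℂ) ≠ 0 := by
          simp [Complex.ofReal_ne_zero, ne_of_gt hα]
        show T (Pm ((α : ℂ)⁻¹ • Tp x)) = x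
        rw [map_smul, map_smul]
        have : T (Pm (Tp x)) = (α : ℂ) • x := by
          have hsplit : T (Pp (Tp x)) + T (Pm (Tp x)) = (α : ℂ) • x := by
            rw [← map_add, hPpPm, hSapp]
          rw [hPp0] at hsplit
          simpa using hsplit
        rw [this, smul_smul, inv_mul_cancel₀ hαne, one_smul]
    · -- tight frame on M₊
      intro x hx
      have := hsump x
      rwa [hdiagp x hx] at this
    · -- tight frame on M₋
      intro x hx
      have := hsumm x
      rwa [hdiagm x hx] at this
  · -- backward direction
    rintro ⟨hm, α, hα, htp, htm⟩
    refine ⟨α, hα, ?_⟩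
    have hαne : (α : ℂ) ≠ 0 := by simp [Complex.ofReal_ne_zero, ne_of_gt hα]
    -- frame vectors lie in the corresponding ranges
    have hfi_pos : ∀ i, posIdx J f i → f i ∈ LinearMap.range (T.comp Pp : lp (fun _ : I => ℂ) 2 →ₗ[ℂ] H) := by
      intro i hi
      refine ⟨lp.single 2 i (1 : ℂ), ?_⟩
      have hsingle : Pp (lp.single 2 i (1 : ℂ)) = lp.single 2 i (1 : ℂ) := by
        apply lp.ext; funext j
        rw [hPp]
        by_cases hji : j = i
        · subst hji; rw [if_pos hi]
        · rw [lp.single_apply_ne 2 i _ hji]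
          split_ifs <;> rfl
      show T (Pp (lp.single 2 i (1 : ℂ))) = f i
      rw [hsingle, hT]
    have hfi_neg : ∀ i, ¬ posIdx J f i → f i ∈ LinearMap.range (T.comp Pm : lp (fun _ : I => ℂ) 2 →ₗ[ℂ] H) := by
      intro i hi
      refine ⟨lp.single 2 i (1 : ℂ), ?_⟩
      have hsingle : Pm (lp.single 2 i (1 : ℂ)) = lp.single 2 i (1 : ℂ) := by
        apply lp.ext; funext j
        rw [hPm]
        by_cases hji : j = i
        · subst hji; rw [if_neg hi]
        · rw [lp.single_apply_ne 2 i _ hji]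
          split_ifs <;> rfl
      show T (Pm (lp.single 2 i (1 : ℂ))) = f i
      rw [hsingle, hT]
    -- mixed terms vanish
    have hmixp : ∀ x, x ∈ LinearMap.range (T.comp Pp : lp (fun _ : I => ℂ) 2 →ₗ[ℂ] H) → Pm (Tp x) = 0 := by
      intro x hx
      apply lp.ext; funext i
      rw [lp.coeFn_zero, hPm]
      by_cases hi : posIdx J f i
      · rw [if_pos hi]; rfl
      · rw [if_neg hi]
        have hfi := hfi_neg i hi
        rw [hm] at hfi
        have h0 : kre J (f i) x = 0 := hfi x hx
        rw [htpc x i, if_neg hi] at h0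
        simp only [Pi.zero_apply]
        simpa using h0
    have hmixm : ∀ x, x ∈ LinearMap.range (T.comp Pm : lp (fun _ : I => ℂ) 2 →ₗ[ℂ] H) → Pp (Tp x) = 0 := by
      intro x hx
      apply lp.ext; funext i
      rw [lp.coeFn_zero, hPp]
      by_cases hi : posIdx J f i
      · rw [if_pos hi]
        have hx' : ∀ s ∈ LinearMap.range (T.comp Pp : lp (fun _ : I => ℂ) 2 →ₗ[ℂ] H), kre J x s = 0 := by
          rw [hm] at hx; exact hx
        have h0 : kre J (f i) x = 0 := by
          rw [hconj, hx' (f i) (hfi_pos i hi)]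
          simp
        rw [htpc x i, if_pos hi] at h0
        simpa using h0
      · rw [if_neg hi]; rfl
    have hTpfix : ∀ x, x ∈ LinearMap.range (T.comp Pp : lp (fun _ : I => ℂ) 2 →ₗ[ℂ] H) → Pp (Tp x) = Tp x := by
      intro x hx
      conv_rhs => rw [← hPpPm (Tp x)]
      rw [hmixp x hx, add_zero]
    have hTmfix : ∀ x, x ∈ LinearMap.range (T.comp Pm : lp (fun _ : I => ℂ) 2 →ₗ[ℂ] H) → Pm (Tp x) = Tp x := by
      intro x hx
      conv_rhs => rw [← hPpPm (Tp x)]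
      rw [hmixm x hx, zero_add]
    -- diagonal identities on each range, in complex form
    have hdp : ∀ x, x ∈ LinearMap.range (T.comp Pp : lp (fun _ : I => ℂ) 2 →ₗ[ℂ] H) →
        (inner ℂ (Tp x) (Tp x) : ℂ) = (α : ℂ) * kre J x x := by
      intro x hx
      have h1 : ‖Pp (Tp x)‖ ^ 2 = α * (kre J x x).re := (hsump x).unique (htp x hx)
      rw [hTpfix x hx] at h1
      have hxr : kre J x x = (((kre J x x).re : ℝ) : ℂ) := by
        apply Complex.ext <;> simp [hreal x]
      rw [inner_self_eq_norm_sq_to_K, hxr]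
      rw [← RCLike.ofReal_pow, h1, RCLike.ofReal_mul]
      norm_cast
    have hdm : ∀ x, x ∈ LinearMap.range (T.comp Pm : lp (fun _ : I => ℂ) 2 →ₗ[ℂ] H) →
        (inner ℂ (Tp x) (Tp x) : ℂ) = -(α : ℂ) * kre J x x := by
      intro x hx
      have h1 : ‖Pm (Tp x)‖ ^ 2 = α * (-(kre J x x).re) := (hsumm x).unique (htm x hx)
      rw [hTmfix x hx] at h1
      have hxr : kre J x x = (((kre J x x).re : ℝ) : ℂ) := by
        apply Complex.ext <;> simp [hreal x]
      rw [inner_self_eq_norm_sq_to_K, hxr]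
      rw [← RCLike.ofReal_pow, h1, RCLike.ofReal_mul, RCLike.ofReal_neg]
      ring_nf
      norm_cast
    -- polarization
    have hop : ∀ x ∈ LinearMap.range (T.comp Pp : lp (fun _ : I => ℂ) 2 →ₗ[ℂ] H), ∀ y ∈ LinearMap.range (T.comp Pp : lp (fun _ : I => ℂ) 2 →ₗ[ℂ] H),
        (inner ℂ (Tp x) (Tp y) : ℂ) = (α : ℂ) * kre J x y := by
      have := sesq_polar (LinearMap.range (T.comp Pp : lp (fun _ : I => ℂ) 2 →ₗ[ℂ] H))
        (fun x y => (inner ℂ (Tp x) (Tp y) : ℂ) - (α : ℂ) * kre J x y)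
        (by intro x y z; simp only [kre, map_add, inner_add_left]; ring)
        (by intro x y z; simp only [kre, map_add, inner_add_right]; ring)
        (by intro c x y; simp only [kre, map_smul, inner_smul_left]; ring)
        (by intro c x y; simp only [kre, map_smul, inner_smul_right]; ring)
        (by intro x hx
            show (inner ℂ (Tp x) (Tp x) : ℂ) - (α : ℂ) * kre J x x = 0
            rw [hdp x hx]; ring)
      intro x hx y hy
      have h := this x hx y hy
      linear_combination h
    have hom : ∀ x ∈ LinearMap.range (T.comp Pm : lp (fun _ : I => ℂ) 2 →ₗ[ℂ] H), ∀ y ∈ LinearMap.range (T.comp Pm : lp (fun _ : I => ℂ) 2 →ₗ[ℂ] H),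
        (inner ℂ (Tp x) (Tp y) : ℂ) = -(α : ℂ) * kre J x y := by
      have := sesq_polar (LinearMap.range (T.comp Pm : lp (fun _ : I => ℂ) 2 →ₗ[ℂ] H))
        (fun x y => (inner ℂ (Tp x) (Tp y) : ℂ) + (α : ℂ) * kre J x y)
        (by intro x y z; simp only [kre, map_add, inner_add_left]; ring)
        (by intro x y z; simp only [kre, map_add, inner_add_right]; ring)
        (by intro c x y; simp only [kre, map_smul, inner_smul_left]; ring)
        (by intro c x y; simp only [kre, map_smul, inner_smul_right]; ring)
        (by intro x hx
            show (inner ℂ (Tp x) (Tp x) : ℂ) + (α : ℂ) * kre J x x = 0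
            rw [hdm x hx]; ring)
      intro x hx y hy
      have h := this x hx y hy
      linear_combination h
    -- the main identity
    have hmain : ∀ x y : H, kre J (T (Tp x)) y = (α : ℂ) * kre J x y := by
      intro x y
      obtain ⟨u, rfl⟩ := hTsurj x
      obtain ⟨v, rfl⟩ := hTsurj y
      have ha : T (Pp u) ∈ LinearMap.range (T.comp Pp : lp (fun _ : I => ℂ) 2 →ₗ[ℂ] H) := ⟨u, rfl⟩
      have hb : T (Pm u) ∈ LinearMap.range (T.comp Pm : lp (fun _ : I => ℂ) 2 →ₗ[ℂ] H) := ⟨u, rfl⟩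
      have hc : T (Pp v) ∈ LinearMap.range (T.comp Pp : lp (fun _ : I => ℂ) 2 →ₗ[ℂ] H) := ⟨v, rfl⟩
      have hd : T (Pm v) ∈ LinearMap.range (T.comp Pm : lp (fun _ : I => ℂ) 2 →ₗ[ℂ] H) := ⟨v, rfl⟩
      have hxab : T u = T (Pp u) + T (Pm u) := by rw [← map_add, hPpPm]
      have hycd : T v = T (Pp v) + T (Pm v) := by rw [← map_add, hPpPm]
      have hpx : Pp (Tp (T u)) = Tp (T (Pp u)) := by
        rw [hxab, map_add Tp, map_add Pp, hTpfix _ ha, hmixm _ hb, add_zero]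
      have hmx : Pm (Tp (T u)) = Tp (T (Pm u)) := by
        rw [hxab, map_add Tp, map_add Pm, hmixp _ ha, hTmfix _ hb, zero_add]
      have hpy : Pp (Tp (T v)) = Tp (T (Pp v)) := by
        rw [hycd, map_add Tp, map_add Pp, hTpfix _ hc, hmixm _ hd, add_zero]
      have hmy : Pm (Tp (T v)) = Tp (T (Pm v)) := by
        rw [hycd, map_add Tp, map_add Pm, hmixp _ hc, hTmfix _ hd, zero_add]
      rw [hkey (Tp (T u)) (T v), hpx, hmx, hpy, hmy]
      rw [hop _ ha _ hc, hom _ hb _ hd]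
      have hbc : kre J (T (Pm u)) (T (Pp v)) = 0 := by
        have := hb; rw [hm] at this
        exact this _ hc
      have had : kre J (T (Pp u)) (T (Pm v)) = 0 := by
        have hdb : kre J (T (Pm v)) (T (Pp u)) = 0 := by
          have := hd; rw [hm] at this
          exact this _ ha
        rw [hconj, hdb]
        simp
      have hk : kre J (T u) (T v)
          = kre J (T (Pp u)) (T (Pp v)) + kre J (T (Pm u)) (T (Pm v)) := by
        conv_lhs => rw [hxab, hycd]
        simp only [kre, map_add, inner_add_left, inner_add_right]
        have hbc' := hbc
        have had' := had
        simp only [kre] at hbc' had'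
        rw [hbc', had']
        ring
      rw [hk]
      ring
    -- conclude the operator identity
    ext x
    have hzero : T (Tp x) - (α : ℂ) • x = 0 := by
      set z := T (Tp x) - (α : ℂ) • x with hz
      have hJz : ∀ y : H, (inner ℂ (J z) y : ℂ) = 0 := by
        intro y
        have h := hmain x y
        simp only [kre] at h
        rw [hz, map_sub, inner_sub_left, map_smul, inner_smul_left, Complex.conj_ofReal]
        rw [h]
        ring
      have : (inner ℂ (J z) (J z) : ℂ) = 0 := hJz (J z)
      have hJz0 : J z = 0 := inner_self_eq_zero.mp this
      have := congrArg J hJz0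
      rwa [hJJ, map_zero] at this
    have : T (Tp x) = (α : ℂ) • x := by
      have := sub_eq_zero.mp hzero
      exact this
    simpa using this
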